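/- Let c ∈ F_{2^d} \ F_2 with d = gcd(2i, n) = gcd(i, n) < n, let n be even, and let u be the multiplicative inverse of 2^i + 1 modulo 2^n − 1. Then the compositional inverse of G(x) = (x + tr(x^{2^i+1}))^{2^i+1} is G^{-1}(x) = x^u + tr(x), and the c-differential uniformity of G^{-1} is at most 2. -/
import Mathlib


/-- The absolute trace from `F_{2^n}` to its prime field, computed inside the field. -/
noncomputable def aTr {K : Type} [CommRing K] (n : ℕ) (x : K) : K :=
  ∑ k ∈ Finset.range n, x ^ 2 ^ k

/-- The `c`-differential uniformity of `F`. -/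
noncomputable def cDelta {K : Type} [Field K] (c : K) (F : K → K) : ℕ :=
  sSup { k : ℕ | ∃ a b : K, (c = 1 → a ≠ 0) ∧
    k = Nat.card {x : K // F (x + a) + c * F x = b} }


section helpers
variable {K : Type} [Field K] [CharP K 2]

lemma aTr_add (n : ℕ) (x y : K) : aTr n (x + y) = aTr n x + aTr n y := by
  unfold aTr
  rw [← Finset.sum_add_distrib]
  exact Finset.sum_congr rfl fun k _ => add_pow_char_pow ..

lemma aTr_sq (n : ℕ) (x : K) (hx : x ^ 2 ^ n = x) : aTr n (x ^ 2) = aTr n x := by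
  have h1 : ∑ k ∈ Finset.range (n+1), x ^ 2 ^ k = aTr n (x ^ 2) + x := by
    rw [Finset.sum_range_succ']
    simp only [pow_zero, pow_one, aTr]
    congr 1
    exact Finset.sum_congr rfl fun k _ => by
      rw [← pow_mul, ← pow_succ']
  have h2 : ∑ k ∈ Finset.range (n+1), x ^ 2 ^ k = aTr n x + x := by
    rw [Finset.sum_range_succ, hx]; rfl
  have := h1.symm.trans h2
  exact add_right_cancel this

lemma aTr_pow2 (n : ℕ) (hx : ∀ y : K, y ^ 2 ^ n = y) (i : ℕ) (x : K) :
    aTr n (x ^ 2 ^ i) = aTr n x := by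
  induction i with
  | zero => simp
  | succ j ih =>
      have : x ^ 2 ^ (j+1) = (x ^ 2 ^ j) ^ 2 := by
        rw [← pow_mul, pow_succ]
      rw [this, aTr_sq n _ (hx _), ih]

lemma aTr_mul_self (n : ℕ) (hx : ∀ y : K, y ^ 2 ^ n = y) (x : K) :
    aTr n x * aTr n x = aTr n x := by
  have h : (aTr n x) ^ 2 = aTr n (x ^ 2) := by
    unfold aTr
    rw [sum_pow_char]
    exact Finset.sum_congr rfl fun k _ => by
      rw [← pow_mul, ← pow_mul, mul_comm 2 (2^k)]
  rw [← sq, h, aTr_sq n x (hx x)]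

lemma aTr_zero_or_one (n : ℕ) (hx : ∀ y : K, y ^ 2 ^ n = y) (x : K) :
    aTr n x = 0 ∨ aTr n x = 1 := by
  have h := aTr_mul_self n hx x
  rcases mul_eq_zero.1 (by linear_combination h : aTr n x * (aTr n x - 1) = 0) with h' | h'
  · exact Or.inl h'
  · exact Or.inr (by linear_combination h')

lemma aTr_one (n : ℕ) (hn : Even n) : aTr n (1 : K) = 0 := by
  obtain ⟨k, hk⟩ := hn
  simp only [aTr, one_pow, Finset.sum_const, Finset.card_range, nsmul_eq_mul, mul_one, hk]
  push_cast
  exact CharTwo.add_self_eq_zero _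

/-- the key algebraic uniqueness -/
lemma keyalg (i u : ℕ) (hmu : ∀ y : K, y ^ ((2 ^ i + 1) * u) = y)
    (c : K) (hcq : c ^ 2 ^ i = c) (hc1 : c ≠ 1) (a b' s s' : K)
    (h1 : (b' + c * s) ^ (2 ^ i + 1) = s ^ (2 ^ i + 1) + a)
    (h2 : (b' + c * s') ^ (2 ^ i + 1) = s' ^ (2 ^ i + 1) + a) : s = s' := by
  have htwo : (2 : K) = 0 := CharTwo.two_eq_zero
  have hγ0 : ((c + 1) ^ 2 : K) ≠ 0 := by
    apply pow_ne_zero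
    intro h
    apply hc1
    have : c = -1 := by linear_combination h
    rw [this, CharTwo.neg_eq]
  have hγq : (((c + 1) ^ 2 : K)) ^ 2 ^ i = (c + 1) ^ 2 := by
    rw [← pow_mul, mul_comm, pow_mul, add_pow_char_pow, hcq, one_pow]
  rw [pow_succ, add_pow_char_pow, mul_pow, hcq, pow_succ] at h1 h2
  set z := (c+1)^2 * s + c * b' with hz
  set z' := (c+1)^2 * s' + c * b' with hz'
  have hzz : z ^ (2 ^ i + 1) = z' ^ (2 ^ i + 1) := by
    rw [pow_succ, pow_succ, add_pow_char_pow, add_pow_char_pow]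
    simp only [mul_pow, hcq, hγq]
    linear_combination ((c+1)^2) * h1 - ((c+1)^2) * h2 +
      ((c+1)^3 * (s^(2^i)*s - s'^(2^i)*s')) * htwo
  have hz2 : z = z' := by
    calc z = (z ^ (2^i+1)) ^ u := by rw [← pow_mul, hmu]
    _ = (z' ^ (2^i+1)) ^ u := by rw [hzz]
    _ = z' := by rw [← pow_mul, hmu]
  have : (c+1)^2 * s = (c+1)^2 * s' := by
    have := hz2
    rw [hz, hz'] at this
    exact add_right_cancel this
  exact mul_left_cancel₀ hγ0 this

end helpers

/-- with `c ∈ F_{2^d} \ F_2`, `d = gcd(2i,n) = gcd(i,n) < n`, `n`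
even and `u ≡ (2^i+1)^{-1} mod 2^n - 1`, the compositional inverse of
`G(x) = (x + tr(x^{2^i+1}))^{2^i+1}` is `x^u + tr(x)`, whose `c`-differential
uniformity is at most 2. -/
theorem stmt14 (n i d u : ℕ) (hne : Even n)
    (hd2 : d = Nat.gcd (2 * i) n) (hd1 : d = Nat.gcd i n) (hdn : d < n)
    (hu : (2 ^ i + 1) * u ≡ 1 [MOD 2 ^ n - 1])
    (c : GaloisField 2 n) (hc : c ^ 2 ^ d = c) (hc0 : c ≠ 0) (hc1 : c ≠ 1) :
    Function.LeftInverse (fun x : GaloisField 2 n => x ^ u + aTr n x)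
      (fun x : GaloisField 2 n => (x + aTr n (x ^ (2 ^ i + 1))) ^ (2 ^ i + 1)) ∧
    Function.RightInverse (fun x : GaloisField 2 n => x ^ u + aTr n x)
      (fun x : GaloisField 2 n => (x + aTr n (x ^ (2 ^ i + 1))) ^ (2 ^ i + 1)) ∧
    cDelta c (fun x : GaloisField 2 n => x ^ u + aTr n x) ≤ 2 := by
  classical
  have hn0 : n ≠ 0 := by omega
  haveI : Fintype (GaloisField 2 n) := Fintype.ofFinite _
  have hcard : Fintype.card (GaloisField 2 n) = 2 ^ n := by
    rw [← Nat.card_eq_fintype_card]; exact GaloisField.card 2 n hn0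
  have hpow : ∀ y : GaloisField 2 n, y ^ 2 ^ n = y := fun y => by
    conv_rhs => rw [← FiniteField.pow_card y]
    rw [hcard]
  have htwo : (2 : GaloisField 2 n) = 0 := CharTwo.two_eq_zero
  have hn2 : 2 ≤ n := by rcases hne with ⟨k, hk⟩; omega
  have hN : 3 ≤ 2 ^ n - 1 := by
    have h4 : (4 : ℕ) ≤ 2 ^ n := by
      calc (4:ℕ) = 2 ^ 2 := rfl
      _ ≤ 2 ^ n := Nat.pow_le_pow_right (by norm_num) hn2
    omega
  have hmu : ∀ y : GaloisField 2 n, y ^ ((2 ^ i + 1) * u) = y := by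
    intro y
    have h1 : ((2 ^ i + 1) * u) % (2 ^ n - 1) = 1 := by
      have h := hu
      rw [Nat.ModEq] at h
      rw [h, Nat.mod_eq_of_lt (by omega)]
    have hk := Nat.div_add_mod ((2 ^ i + 1) * u) (2 ^ n - 1)
    set k := ((2 ^ i + 1) * u) / (2 ^ n - 1) with hkdef
    have hEq : (2 ^ i + 1) * u = (2 ^ n - 1) * k + 1 := by omega
    by_cases hy : y = 0
    · subst hy
      rw [zero_pow (by omega)]
    · have hy1 : y ^ (2 ^ n - 1) = 1 := by
        have := FiniteField.pow_card_sub_one_eq_one y hy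
        rwa [hcard] at this
      calc y ^ ((2 ^ i + 1) * u) = y ^ ((2 ^ n - 1) * k + 1) := by rw [hEq]
      _ = (y ^ (2 ^ n - 1)) ^ k * y := by rw [pow_succ, pow_mul]
      _ = y := by rw [hy1, one_pow, one_mul]
  have htr01 : ∀ x : GaloisField 2 n, aTr n x = 0 ∨ aTr n x = 1 := aTr_zero_or_one n hpow
  have hdi : d ∣ i := hd1 ▸ Nat.gcd_dvd_left i n
  have hci : c ^ 2 ^ i = c := by
    obtain ⟨e, he⟩ := hdi
    have key : ∀ e', c ^ 2 ^ (d * e') = c := by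
      intro e'
      induction e' with
      | zero => simp
      | succ j ih => rw [Nat.mul_succ, pow_add, pow_mul, ih, hc]
    rw [he]; exact key e
  have hli : Function.LeftInverse (fun x : GaloisField 2 n => x ^ u + aTr n x)
      (fun x : GaloisField 2 n => (x + aTr n (x ^ (2 ^ i + 1))) ^ (2 ^ i + 1)) := by
    intro x
    simp only
    rcases htr01 (x ^ (2 ^ i + 1)) with ht | ht
    · rw [ht, add_zero, ht, add_zero, ← pow_mul]
      exact hmu x
    · rw [ht]
      have hexp : (x + 1) ^ (2 ^ i + 1) = x ^ (2 ^ i + 1) + x ^ 2 ^ i + x + 1 := by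
        rw [pow_succ, add_pow_char_pow, one_pow, pow_succ]; ring
      have htr1 : aTr n ((x + 1) ^ (2 ^ i + 1)) = 1 := by
        rw [hexp, aTr_add, aTr_add, aTr_add, ht, aTr_pow2 n hpow i x,
          aTr_one n hne]
        linear_combination (aTr n x) * htwo
      rw [htr1, ← pow_mul, hmu]
      linear_combination htwo
  refine ⟨hli, ?_, ?_⟩
  · exact hli.rightInverse_of_surjective
      (Finite.surjective_of_injective hli.injective)
  · apply csSup_le'
    rintro k ⟨a, b, -, rfl⟩
    simp only
    have uniq : ∀ x x' : GaloisField 2 n,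
        ((x + a) ^ u + aTr n (x + a)) + c * (x ^ u + aTr n x) = b →
        ((x' + a) ^ u + aTr n (x' + a)) + c * (x' ^ u + aTr n x') = b →
        aTr n x = aTr n x' → x = x' := by
      intro x x' hx hx' htr
      set b' : GaloisField 2 n := b + aTr n a + (1 + c) * aTr n x with hb'
      have hw : ∀ y : GaloisField 2 n,
          ((y + a) ^ u + aTr n (y + a)) + c * (y ^ u + aTr n y) = b →
          aTr n y = aTr n x → (y + a) ^ u = b' + c * y ^ u := by
        intro y hy hty
        rw [aTr_add] at hy
        linear_combination hy - (1 + c) * hty -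
          (aTr n a + c * y ^ u + (1 + c) * aTr n x) * htwo
      have hcube : ∀ y : GaloisField 2 n, ((y + a) ^ u) ^ (2 ^ i + 1) = y + a := by
        intro y
        rw [← pow_mul, mul_comm u (2 ^ i + 1), hmu]
      have hycube : ∀ y : GaloisField 2 n, (y ^ u) ^ (2 ^ i + 1) = y := by
        intro y
        rw [← pow_mul, mul_comm u (2 ^ i + 1), hmu]
      have h1 : (b' + c * x ^ u) ^ (2 ^ i + 1) = (x ^ u) ^ (2 ^ i + 1) + a := by
        rw [← hw x hx rfl, hcube, hycube]
      have h2 : (b' + c * x' ^ u) ^ (2 ^ i + 1) = (x' ^ u) ^ (2 ^ i + 1) + a := by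
        rw [← hw x' hx' htr.symm, hcube, hycube]
      have hs : x ^ u = x' ^ u := keyalg i u hmu c hci hc1 a b' _ _ h1 h2
      calc x = (x ^ u) ^ (2 ^ i + 1) := (hycube x).symm
      _ = (x' ^ u) ^ (2 ^ i + 1) := by rw [hs]
      _ = x' := hycube x'
    have hle : Nat.card {x : GaloisField 2 n // ((x + a) ^ u + aTr n (x + a)) + c * (x ^ u + aTr n x) = b}
        ≤ Nat.card Bool := by
      apply Nat.card_le_card_of_injective
        (fun x => if aTr n (x.1) = 1 then true else false)
      intro x y hxy
      dsimp only at hxy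
      apply Subtype.ext
      apply uniq _ _ x.2 y.2
      rcases htr01 x.1 with h | h <;> rcases htr01 y.1 with h' | h'
      · rw [h, h']
      · exfalso
        rw [if_neg (by rw [h]; exact zero_ne_one), if_pos h'] at hxy
        exact Bool.noConfusion hxy
      · exfalso
        rw [if_pos h, if_neg (by rw [h']; exact zero_ne_one)] at hxy
        exact Bool.noConfusion hxy
      · rw [h, h']
    have hb2 : Nat.card Bool = 2 := by simp [Nat.card_eq_fintype_card]
    rw [hb2] at hle
    exact hle
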